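/- Let f = Σ_{i=0}^{d} f_i(x) y^i ∈ F[x][y] be monic of degree d in y. Suppose f = g·h with g = Σ_{i=0}^{d₁} g_i y^i and h = Σ_{i=0}^{d₂} h_i y^i both monic in y, d₁ + d₂ = d. Then the Jacobian matrix of the d polynomial maps φ_k(u, w) := f_k − Σ_{i+j=k} u_i w_j (0 ≤ k ≤ d−1, variables u₀,…,u_{d₁−1}, w₀,…,w_{d₂−1}, with u_{d₁} = w_{d₂} = 1 fixed) evaluated at (g₀,…,g_{d₁−1}, h₀,…,h_{d₂−1}) is invertible over the fraction field of F[x] if and only if g and h are coprime in y over that fraction field. -/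

import Mathlib

open Polynomial

/-- The Jacobian of the coefficient equations `φ_k(u,w) = f_k − Σ_{i+j=k} u_i w_j`
(with `u_{d₁} = w_{d₂} = 1` fixed) evaluated at the coefficients of `g` and `h`:
the `(k, i)` entry for `i < d₁` is `−h_{k−i}` and the `(k, d₁+j)` entry is `−g_{k−j}`. -/
noncomputable def henselJacobian {R : Type*} [CommRing R] (d₁ d₂ : ℕ)
    (g h : Polynomial R) : Matrix (Fin (d₁ + d₂)) (Fin (d₁ + d₂)) R :=
  Matrix.of fun k j =>
    if (j : ℕ) < d₁ then
      (if (j : ℕ) ≤ (k : ℕ) then -h.coeff ((k : ℕ) - (j : ℕ)) else 0)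
    else
      (if (j : ℕ) - d₁ ≤ (k : ℕ) then -g.coeff ((k : ℕ) - ((j : ℕ) - d₁)) else 0)

namespace HJAux

variable {K : Type*} [Field K] {d₁ d₂ : ℕ}

noncomputable def aPart (d₁ d₂ : ℕ) (v : Fin (d₁ + d₂) → K) : K[X] :=
  ∑ j : Fin d₁, C (v (Fin.castAdd d₂ j)) * X ^ (j : ℕ)

noncomputable def bPart (d₁ d₂ : ℕ) (v : Fin (d₁ + d₂) → K) : K[X] :=
  ∑ j : Fin d₂, C (v (Fin.natAdd d₁ j)) * X ^ (j : ℕ)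

lemma degree_sum_lt {n : ℕ} (c : Fin n → K) :
    (∑ j : Fin n, C (c j) * X ^ (j : ℕ)).degree < (n : WithBot ℕ) := by
  refine lt_of_le_of_lt (degree_sum_le _ _) ?_
  rw [Finset.sup_lt_iff (by exact_mod_cast WithBot.bot_lt_coe n)]
  intro j _
  refine lt_of_le_of_lt (degree_C_mul_X_pow_le _ _) ?_
  exact_mod_cast j.2

lemma coeff_sum {n : ℕ} (c : Fin n → K) (j : Fin n) :
    (∑ i : Fin n, C (c i) * X ^ (i : ℕ)).coeff (j : ℕ) = c j := by
  rw [finset_sum_coeff, Finset.sum_eq_single j]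
  · simp [coeff_C_mul, coeff_X_pow]
  · intro i _ hij
    simp only [coeff_C_mul, coeff_X_pow]
    rw [if_neg (fun hc => hij (Fin.ext hc.symm)), mul_zero]
  · simp

lemma coeff_mul_sum {n : ℕ} (c : Fin n → K) (p : K[X]) (k : ℕ) :
    ((∑ j : Fin n, C (c j) * X ^ (j : ℕ)) * p).coeff k =
      ∑ j : Fin n, c j * (if (j : ℕ) ≤ k then p.coeff (k - (j : ℕ)) else 0) := by
  rw [Finset.sum_mul, finset_sum_coeff]
  refine Finset.sum_congr rfl fun j _ => ?_
  have heq : C (c j) * X ^ (j : ℕ) * p = C (c j) * (p * X ^ (j : ℕ)) := by ring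
  rw [heq, coeff_C_mul, coeff_mul_X_pow']

lemma mulVec_eq (g h : K[X]) (v : Fin (d₁ + d₂) → K) (k : Fin (d₁ + d₂)) :
    (henselJacobian d₁ d₂ g h).mulVec v k =
      -((aPart d₁ d₂ v * h + bPart d₁ d₂ v * g).coeff (k : ℕ)) := by
  rw [coeff_add, aPart, bPart, coeff_mul_sum, coeff_mul_sum, Matrix.mulVec,
    dotProduct, Fin.sum_univ_add, neg_add]
  congr 1
  · rw [← Finset.sum_neg_distrib]
    refine Finset.sum_congr rfl fun j _ => ?_
    simp only [henselJacobian, Matrix.of_apply, Fin.coe_castAdd]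
    rw [if_pos j.2]
    split_ifs with hc <;> ring
  · rw [← Finset.sum_neg_distrib]
    refine Finset.sum_congr rfl fun j _ => ?_
    simp only [henselJacobian, Matrix.of_apply, Fin.coe_natAdd]
    rw [if_neg (by omega), Nat.add_sub_cancel_left]
    split_ifs with hc <;> ring

lemma mulVec_eq_zero_iff (g h : K[X]) (hgd : g.degree ≤ (d₁ : WithBot ℕ))
    (hhd : h.degree ≤ (d₂ : WithBot ℕ)) (v : Fin (d₁ + d₂) → K) :
    (henselJacobian d₁ d₂ g h).mulVec v = 0 ↔
      aPart d₁ d₂ v * h + bPart d₁ d₂ v * g = 0 := by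
  constructor
  · intro hv
    have hdeg : (aPart d₁ d₂ v * h + bPart d₁ d₂ v * g).degree
        < ((d₁ + d₂ : ℕ) : WithBot ℕ) := by
      refine lt_of_le_of_lt (degree_add_le _ _) (max_lt ?_ ?_)
      · refine lt_of_le_of_lt (degree_mul_le _ _) ?_
        calc (aPart d₁ d₂ v).degree + h.degree
            ≤ (aPart d₁ d₂ v).degree + (d₂ : WithBot ℕ) := add_le_add le_rfl hhd
          _ < (d₁ : WithBot ℕ) + (d₂ : WithBot ℕ) := by
              exact WithBot.add_lt_add_right WithBot.coe_ne_bot (degree_sum_lt _)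
          _ = ((d₁ + d₂ : ℕ) : WithBot ℕ) := by push_cast; rfl
      · refine lt_of_le_of_lt (degree_mul_le _ _) ?_
        calc (bPart d₁ d₂ v).degree + g.degree
            ≤ (bPart d₁ d₂ v).degree + (d₁ : WithBot ℕ) := add_le_add le_rfl hgd
          _ < (d₂ : WithBot ℕ) + (d₁ : WithBot ℕ) := by
              exact WithBot.add_lt_add_right WithBot.coe_ne_bot (degree_sum_lt _)
          _ = ((d₁ + d₂ : ℕ) : WithBot ℕ) := by push_cast; ring
    ext n
    rcases lt_or_ge n (d₁ + d₂) with hn | hn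
    · simp only [coeff_zero]
      have := congrFun hv ⟨n, hn⟩
      rw [mulVec_eq] at this
      exact neg_eq_zero.mp this
    · simp only [coeff_zero]
      exact coeff_eq_zero_of_degree_lt (lt_of_lt_of_le hdeg (by exact_mod_cast hn))
  · intro hP
    funext k
    rw [mulVec_eq, hP]
    simp

lemma key (g h : K[X]) (hg : g.Monic) (hh : h.Monic)
    (hd₁ : g.natDegree = d₁) (hd₂ : h.natDegree = d₂) :
    IsUnit (henselJacobian d₁ d₂ g h).det ↔ IsCoprime g h := by
  classical
  have hgd : g.degree ≤ (d₁ : WithBot ℕ) := by rw [← hd₁]; exact degree_le_natDegree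
  have hhd : h.degree ≤ (d₂ : WithBot ℕ) := by rw [← hd₂]; exact degree_le_natDegree
  have hgdeg : g.degree = (d₁ : WithBot ℕ) := by
    rw [degree_eq_natDegree hg.ne_zero, hd₁]
  rw [isUnit_iff_ne_zero, Ne, ← Matrix.exists_mulVec_eq_zero_iff, not_iff_comm]
  constructor
  · -- ¬ coprime → nontrivial kernel
    intro hnc
    set p := EuclideanDomain.gcd g h with hp
    have hpu : ¬IsUnit p := fun hu => hnc (EuclideanDomain.gcd_isUnit_iff.mp hu)
    have hp0 : p ≠ 0 := fun h0 => hg.ne_zero (EuclideanDomain.gcd_eq_zero_iff.mp h0).1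
    have hpdeg : 0 < p.natDegree :=
      natDegree_pos_iff_degree_pos.mpr (degree_pos_of_ne_zero_of_nonunit hp0 hpu)
    obtain ⟨a, ha⟩ : p ∣ g := EuclideanDomain.gcd_dvd_left g h
    obtain ⟨c, hc⟩ : p ∣ h := EuclideanDomain.gcd_dvd_right g h
    have ha0 : a ≠ 0 := by rintro rfl; rw [mul_zero] at ha; exact hg.ne_zero ha
    have hc0 : c ≠ 0 := by rintro rfl; rw [mul_zero] at hc; exact hh.ne_zero hc
    have hna : a.natDegree < d₁ := by
      have := natDegree_mul hp0 ha0
      rw [← ha, hd₁] at this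
      omega
    have hnc' : c.natDegree < d₂ := by
      have := natDegree_mul hp0 hc0
      rw [← hc, hd₂] at this
      omega
    refine ⟨fun i => Fin.addCases (fun j => a.coeff (j : ℕ))
      (fun j => (-c).coeff (j : ℕ)) i, ?_, ?_⟩
    · intro h0
      have := congrFun h0 (Fin.castAdd d₂ ⟨a.natDegree, hna⟩)
      simp only [Fin.addCases_left, Pi.zero_apply] at this
      exact ha0 (leadingCoeff_eq_zero.mp this)
    · rw [mulVec_eq_zero_iff g h hgd hhd]
      have haeq : aPart d₁ d₂ (fun i => Fin.addCases (fun j => a.coeff (j : ℕ))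
          (fun j => (-c).coeff (j : ℕ)) i) = a := by
        rw [aPart]
        simp only [Fin.addCases_left]
        rw [Fin.sum_univ_eq_sum_range (fun i => C (a.coeff i) * X ^ i)]
        conv_rhs => rw [a.as_sum_range' d₁ hna]
        exact Finset.sum_congr rfl fun i _ => C_mul_X_pow_eq_monomial
      have hbeq : bPart d₁ d₂ (fun i => Fin.addCases (fun j => a.coeff (j : ℕ))
          (fun j => (-c).coeff (j : ℕ)) i) = -c := by
        rw [bPart]
        simp only [Fin.addCases_right]
        rw [Fin.sum_univ_eq_sum_range (fun i => C ((-c).coeff i) * X ^ i)]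
        conv_rhs => rw [(-c).as_sum_range' d₂ (by rwa [natDegree_neg])]
        exact Finset.sum_congr rfl fun i _ => C_mul_X_pow_eq_monomial
      rw [haeq, hbeq, ha, hc]
      ring
  · -- nontrivial kernel → ¬ coprime
    rintro ⟨v, hv0, hmv⟩ hco
    rw [mulVec_eq_zero_iff g h hgd hhd] at hmv
    have hdvd : g ∣ aPart d₁ d₂ v * h :=
      ⟨-(bPart d₁ d₂ v), by linear_combination hmv⟩
    have hga : g ∣ aPart d₁ d₂ v := hco.dvd_of_dvd_mul_right hdvd
    have haz : aPart d₁ d₂ v = 0 := by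
      refine eq_zero_of_dvd_of_degree_lt hga ?_
      rw [hgdeg]
      exact degree_sum_lt _
    have hbz : bPart d₁ d₂ v = 0 := by
      rw [haz, zero_mul, zero_add, mul_eq_zero] at hmv
      exact hmv.resolve_right hg.ne_zero
    apply hv0
    funext i
    refine Fin.addCases (fun j => ?_) (fun j => ?_) i
    · have := coeff_sum (fun j => v (Fin.castAdd d₂ j)) j
      rw [← aPart, haz] at this
      simpa using this.symm
    · have := coeff_sum (fun j => v (Fin.natAdd d₁ j)) j
      rw [← bPart, hbz] at this
      simpa using this.symm

end HJAux

/-- For a monic factorization `f = g·h` in `F[x][y]`, the Jacobian of the coefficient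
equations evaluated at the coefficients of `g` and `h` is invertible over the fraction
field of `F[x]` iff `g` and `h` are coprime over that fraction field. -/
theorem henselJacobian_isUnit_iff_coprime {F : Type*} [Field F]
    (f g h : Polynomial (Polynomial F)) (d₁ d₂ : ℕ)
    (hf : f.Monic) (hg : g.Monic) (hh : h.Monic)
    (hfgh : f = g * h)
    (hd₁ : g.natDegree = d₁) (hd₂ : h.natDegree = d₂) :
    IsUnit (((henselJacobian d₁ d₂ g h).map
        (algebraMap (Polynomial F) (FractionRing (Polynomial F)))).det) ↔
      IsCoprime
        (g.map (algebraMap (Polynomial F) (FractionRing (Polynomial F))))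
        (h.map (algebraMap (Polynomial F) (FractionRing (Polynomial F)))) := by
  set φ := algebraMap (Polynomial F) (FractionRing (Polynomial F)) with hφ
  have hmap : (henselJacobian d₁ d₂ g h).map φ
      = henselJacobian d₁ d₂ (g.map φ) (h.map φ) := by
    ext k j
    simp only [henselJacobian, Matrix.map_apply, Matrix.of_apply, apply_ite φ,
      map_neg, map_zero, coeff_map]
  rw [hmap]
  exact HJAux.key (g.map φ) (h.map φ) (hg.map φ) (hh.map φ)
    (by rw [hg.natDegree_map]; exact hd₁) (by rw [hh.natDegree_map]; exact hd₂)
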